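/- Assume each D i j is a finite nonempty subset of ℝ and O ∩ 𝒟 ≠ ∅, and let M̲, M̄ be the minimum and maximum of O ∩ 𝒟 in the lexicographic order of row-wise vectorizations. Let i' ∈ Fin p and j' ∈ Fin q with (i' : ℕ) ≤ i_{j'}. Then every X ∈ O ∩ 𝒟 satisfies M̲ i' j' ≤ X i' j' ≤ M̄ i' j'. -/

import Mathlib

/-- Lexicographic order `u ⪰ v` on `Fin p → ℝ`. -/
def lexGe {p : ℕ} (u v : Fin p → ℝ) : Prop :=
  u = v ∨ ∃ k : Fin p, (∀ i : Fin p, i < k → u i = v i) ∧ v k < u k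

/-- The set of `p × q` matrices whose columns are lexicographically
non-increasing. -/
def Omat (p q : ℕ) : Set (Fin p → Fin q → ℝ) :=
  {X | ∀ j j' : Fin q, j ≤ j' → lexGe (fun i => X i j) (fun i => X i j')}

/-- The set of matrices respecting the entrywise domains `D`. -/
def Dmat {p q : ℕ} (D : Fin p → Fin q → Set ℝ) : Set (Fin p → Fin q → ℝ) :=
  {X | ∀ i j, X i j ∈ D i j}

/-- Row-wise vectorization: `vec X (q·i + j) = X i j`. -/
def vec {p q : ℕ} (X : Fin p → Fin q → ℝ) : Fin (p * q) → ℝ :=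
  fun k => X (finProdFinEquiv.symm k).1 (finProdFinEquiv.symm k).2

lemma lex_lt_iff' {n : ℕ} {u v : Fin n → ℝ} :
    toLex u < toLex v ↔ ∃ k : Fin n, (∀ i : Fin n, i < k → u i = v i) ∧ u k < v k := Iff.rfl

lemma lexGe_iff {n : ℕ} {u v : Fin n → ℝ} : lexGe u v ↔ toLex v ≤ toLex u := by
  rw [le_iff_lt_or_eq]
  refine Iff.trans ?_ (or_congr_left lex_lt_iff').symm
  constructor
  · rintro (h | ⟨k, h1, h2⟩)
    · exact Or.inr (congrArg toLex h.symm)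
    · exact Or.inl ⟨k, fun i hi => (h1 i hi).symm, h2⟩
  · rintro (⟨k, h1, h2⟩ | h)
    · exact Or.inr ⟨k, fun i hi => (h1 i hi).symm, h2⟩
    · exact Or.inl (toLex_inj.mp h).symm

/-- Totality of the lexicographic order on `Fin n → ℝ`. -/
lemma lex_total {n : ℕ} (u v : Fin n → ℝ) : toLex u ≤ toLex v ∨ toLex v ≤ toLex u := by
  by_cases h : u = v
  · exact Or.inl (le_of_eq (congrArg toLex h))
  · have hne : ∃ m : ℕ, ∃ hm : m < n, u ⟨m, hm⟩ ≠ v ⟨m, hm⟩ := by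
      by_contra hc
      push_neg at hc
      exact h (funext fun i => by simpa using hc i.1 i.isLt)
    set S := {m : ℕ | ∃ hm : m < n, u ⟨m, hm⟩ ≠ v ⟨m, hm⟩} with hS
    have hSne : S.Nonempty := hne
    obtain ⟨hk, hkne⟩ := Nat.sInf_mem hSne
    let k : Fin n := ⟨sInf S, hk⟩
    have hbelow : ∀ j : Fin n, j < k → u j = v j := by
      intro j hj
      by_contra hne2
      have hjS : (j : ℕ) ∈ S := ⟨j.isLt, by simpa using hne2⟩
      have hj' : (j : ℕ) < sInf S := Fin.lt_def.mp hj
      exact absurd (Nat.sInf_le hjS) (not_le.mpr hj')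
    have hkne' : u k ≠ v k := hkne
    rcases lt_or_gt_of_ne hkne' with hlt | hgt
    · exact Or.inl (le_of_lt (lex_lt_iff'.mpr ⟨k, hbelow, hlt⟩))
    · exact Or.inr (le_of_lt (lex_lt_iff'.mpr ⟨k, fun j hj => (hbelow j hj).symm, hgt⟩))

lemma vec_apply {p q : ℕ} (X : Fin p → Fin q → ℝ) (i : Fin p) (j : Fin q) :
    vec X (finProdFinEquiv (i, j)) = X i j := by
  simp [vec]

lemma vec_inj {p q : ℕ} {X Y : Fin p → Fin q → ℝ} (h : vec X = vec Y) : X = Y := by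
  funext i j
  have := congrFun h (finProdFinEquiv (i, j))
  rwa [vec_apply, vec_apply] at this

/-- Columnwise lex domination implies lex domination of row-wise vectorizations. -/
lemma vec_le_of_col_le {p q : ℕ} {Z W : Fin p → Fin q → ℝ}
    (h : ∀ j, toLex (fun i => Z i j) ≤ toLex (fun i => W i j)) :
    toLex (vec Z) ≤ toLex (vec W) := by
  rcases lex_total (vec Z) (vec W) with hle | hge
  · exact hle
  rcases hge.lt_or_eq with hlt | heq
  · exfalso
    obtain ⟨k, hk1, hk2⟩ := lex_lt_iff'.mp hlt
    set i : Fin p := (finProdFinEquiv.symm k).1 with hi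
    set j : Fin q := (finProdFinEquiv.symm k).2 with hj
    have hk : finProdFinEquiv (i, j) = k := by
      rw [hi, hj]; simpa using finProdFinEquiv.apply_symm_apply k
    have hWZ : W i j < Z i j := hk2
    have hne : (fun i => Z i j) ≠ (fun i => W i j) := by
      intro he
      have hzw : Z i j = W i j := congrFun he i
      linarith
    have hstrict : toLex (fun i => Z i j) < toLex (fun i => W i j) :=
      lt_of_le_of_ne (h j) (fun he => hne (toLex_inj.mp he))
    obtain ⟨i₀, hi1, hi2⟩ := lex_lt_iff'.mp hstrict
    have hi2' : Z i₀ j < W i₀ j := hi2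
    rcases lt_trichotomy i₀ i with hlt' | heq' | hgt'
    · have hq : 0 < q := j.pos
      have hklt : finProdFinEquiv (i₀, j) < k := by
        rw [← hk, Fin.lt_def]
        simp only [finProdFinEquiv_apply_val]
        exact Nat.add_lt_add_left (mul_lt_mul_of_pos_left (Fin.lt_def.mp hlt') hq) _
      have hagree := hk1 _ hklt
      rw [vec_apply, vec_apply] at hagree
      linarith
    · subst heq'
      linarith
    · have : Z i j = W i j := hi1 i hgt'
      linarith
  · exact le_of_eq heq.symm

/-- Each column of the lex-minimum `M` of `O ∩ 𝒟` is lexicographically below the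
corresponding column of any feasible `X`. -/
lemma col_bounds {p q : ℕ} {D : Fin p → Fin q → Set ℝ} {X M : Fin p → Fin q → ℝ}
    (hX : X ∈ Omat p q ∩ Dmat D) (hM : M ∈ Omat p q ∩ Dmat D)
    (hmin : ∀ Y ∈ Omat p q ∩ Dmat D, lexGe (vec Y) (vec M)) :
    ∀ j, toLex (fun i => M i j) ≤ toLex (fun i => X i j) := by
  classical
  set Z : Fin p → Fin q → ℝ := fun i j =>
    if toLex (fun i => X i j) ≤ toLex (fun i => M i j) then X i j else M i j with hZdef
  have hcases : ∀ j, (fun i => Z i j) = (fun i => X i j) ∨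
      (fun i => Z i j) = (fun i => M i j) := by
    intro j
    by_cases h : toLex (fun i => X i j) ≤ toLex (fun i => M i j)
    · left; funext i; simp [hZdef, h]
    · right; funext i; simp [hZdef, h]
  have hle : ∀ j, toLex (fun i => Z i j) ≤ toLex (fun i => X i j) ∧
      toLex (fun i => Z i j) ≤ toLex (fun i => M i j) := by
    intro j
    by_cases h : toLex (fun i => X i j) ≤ toLex (fun i => M i j)
    · have hZX : (fun i => Z i j) = (fun i => X i j) := funext fun i => by simp [hZdef, h]
      rw [hZX]; exact ⟨le_refl _, h⟩
    · have hMX : toLex (fun i => M i j) ≤ toLex (fun i => X i j) :=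
        (lex_total _ _).resolve_left h
      have hZM : (fun i => Z i j) = (fun i => M i j) := funext fun i => by simp [hZdef, h]
      rw [hZM]; exact ⟨hMX, le_refl _⟩
  have hZO : Z ∈ Omat p q := by
    intro j j' hjj'
    rw [lexGe_iff]
    rcases hcases j with h | h
    · rw [h]; exact le_trans (hle j').1 (lexGe_iff.mp (hX.1 j j' hjj'))
    · rw [h]; exact le_trans (hle j').2 (lexGe_iff.mp (hM.1 j j' hjj'))
  have hZD : Z ∈ Dmat D := by
    intro i j
    rcases hcases j with h | h
    · rw [show Z i j = X i j from congrFun h i]; exact hX.2 i j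
    · rw [show Z i j = M i j from congrFun h i]; exact hM.2 i j
  have hZleM : toLex (vec Z) ≤ toLex (vec M) := vec_le_of_col_le fun j => (hle j).2
  have hMleZ : toLex (vec M) ≤ toLex (vec Z) := lexGe_iff.mp (hmin Z ⟨hZO, hZD⟩)
  have hZeq : Z = M := vec_inj (toLex_inj.mp (le_antisymm hZleM hMleZ))
  intro j
  have := (hle j).1
  rw [hZeq] at this
  exact this

/-- Each column of the lex-maximum `M` of `O ∩ 𝒟` is lexicographically above the
corresponding column of any feasible `X`. -/
lemma col_bounds' {p q : ℕ} {D : Fin p → Fin q → Set ℝ} {X M : Fin p → Fin q → ℝ}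
    (hX : X ∈ Omat p q ∩ Dmat D) (hM : M ∈ Omat p q ∩ Dmat D)
    (hmax : ∀ Y ∈ Omat p q ∩ Dmat D, lexGe (vec M) (vec Y)) :
    ∀ j, toLex (fun i => X i j) ≤ toLex (fun i => M i j) := by
  classical
  set Z : Fin p → Fin q → ℝ := fun i j =>
    if toLex (fun i => X i j) ≤ toLex (fun i => M i j) then M i j else X i j with hZdef
  have hcases : ∀ j, (fun i => Z i j) = (fun i => X i j) ∨
      (fun i => Z i j) = (fun i => M i j) := by
    intro j
    by_cases h : toLex (fun i => X i j) ≤ toLex (fun i => M i j)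
    · right; funext i; simp [hZdef, h]
    · left; funext i; simp [hZdef, h]
  have hle : ∀ j, toLex (fun i => X i j) ≤ toLex (fun i => Z i j) ∧
      toLex (fun i => M i j) ≤ toLex (fun i => Z i j) := by
    intro j
    by_cases h : toLex (fun i => X i j) ≤ toLex (fun i => M i j)
    · have hZM : (fun i => Z i j) = (fun i => M i j) := funext fun i => by simp [hZdef, h]
      rw [hZM]; exact ⟨h, le_refl _⟩
    · have hMX : toLex (fun i => M i j) ≤ toLex (fun i => X i j) :=
        (lex_total _ _).resolve_left h
      have hZX : (fun i => Z i j) = (fun i => X i j) := funext fun i => by simp [hZdef, h]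
      rw [hZX]; exact ⟨le_refl _, hMX⟩
  have hZO : Z ∈ Omat p q := by
    intro j j' hjj'
    rw [lexGe_iff]
    rcases hcases j' with h | h
    · rw [h]; exact le_trans (lexGe_iff.mp (hX.1 j j' hjj')) (hle j).1
    · rw [h]; exact le_trans (lexGe_iff.mp (hM.1 j j' hjj')) (hle j).2
  have hZD : Z ∈ Dmat D := by
    intro i j
    rcases hcases j with h | h
    · rw [show Z i j = X i j from congrFun h i]; exact hX.2 i j
    · rw [show Z i j = M i j from congrFun h i]; exact hM.2 i j
  have hMleZ : toLex (vec M) ≤ toLex (vec Z) := vec_le_of_col_le fun j => (hle j).2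
  have hZleM : toLex (vec Z) ≤ toLex (vec M) := lexGe_iff.mp (hmax Z ⟨hZO, hZD⟩)
  have hZeq : Z = M := vec_inj (toLex_inj.mp (le_antisymm hZleM hMleZ))
  intro j
  have := (hle j).1
  rw [hZeq] at this
  exact this

/-- Sandwich lemma for lexicographically comparable vectors agreeing below `N`. -/
lemma sandwich {n N : ℕ} {a x b : Fin n → ℝ}
    (ha : toLex a ≤ toLex x) (hb : toLex x ≤ toLex b)
    (hab : ∀ s : Fin n, (s : ℕ) < N → a s = b s)
    {i : Fin n} (hi : (i : ℕ) ≤ N) : a i ≤ x i ∧ x i ≤ b i := by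
  constructor
  · rcases ha.lt_or_eq with hlt | heq
    · obtain ⟨k, hk1, hk2⟩ := lex_lt_iff'.mp hlt
      have hkN : ¬ ((k : ℕ) < N) := by
        intro hkN
        rcases hb.lt_or_eq with hlt' | heq'
        · obtain ⟨m, hm1, hm2⟩ := lex_lt_iff'.mp hlt'
          rcases lt_trichotomy k m with h | h | h
          · have h1 := hm1 k h
            have h2 := hab k hkN
            linarith
          · subst h
            have h2 := hab k hkN
            linarith
          · have h1 := hk1 m h
            have h2 := hab m (lt_trans (Fin.lt_def.mp h) hkN)
            linarith
        · have hxb : x = b := toLex_inj.mp heq'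
          have h2 := hab k hkN
          rw [hxb] at hk2
          linarith
      rcases lt_trichotomy ((i : ℕ)) ((k : ℕ)) with h | h | h
      · exact le_of_eq (hk1 i (Fin.lt_def.mpr h))
      · have hik : i = k := Fin.ext h
        rw [hik]; exact le_of_lt hk2
      · exact absurd (lt_of_lt_of_le h hi) hkN
    · exact le_of_eq (congrFun (toLex_inj.mp heq) i)
  · rcases hb.lt_or_eq with hlt | heq
    · obtain ⟨m, hm1, hm2⟩ := lex_lt_iff'.mp hlt
      have hmN : ¬ ((m : ℕ) < N) := by
        intro hmN
        rcases ha.lt_or_eq with hlt' | heq'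
        · obtain ⟨k, hk1, hk2⟩ := lex_lt_iff'.mp hlt'
          rcases lt_trichotomy m k with h | h | h
          · have h1 := hk1 m h
            have h2 := hab m hmN
            linarith
          · subst h
            have h2 := hab m hmN
            linarith
          · have h1 := hm1 k h
            have h2 := hab k (lt_trans (Fin.lt_def.mp h) hmN)
            linarith
        · have hax : a = x := toLex_inj.mp heq'
          have h2 := hab m hmN
          rw [← hax] at hm2
          linarith
      rcases lt_trichotomy ((i : ℕ)) ((m : ℕ)) with h | h | h
      · exact le_of_eq (hm1 i (Fin.lt_def.mpr h))
      · have him : i = m := Fin.ext h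
        rw [him]; exact le_of_lt hm2
      · exact absurd (lt_of_lt_of_le h hi) hmN
    · exact le_of_eq (congrFun (toLex_inj.mp heq) i)

theorem stmt8 (p q : ℕ) (D : Fin p → Fin q → Set ℝ)
    (hDfin : ∀ i j, (D i j).Finite) (hDne : ∀ i j, (D i j).Nonempty)
    (hOD : (Omat p q ∩ Dmat D).Nonempty)
    (Mlo Mhi : Fin p → Fin q → ℝ)
    -- `Mlo` is the lexicographic minimum of `O ∩ 𝒟` (w.r.t. vectorizations)
    (hMlo : Mlo ∈ Omat p q ∩ Dmat D ∧
      ∀ X ∈ Omat p q ∩ Dmat D, lexGe (vec X) (vec Mlo))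
    -- `Mhi` is the lexicographic maximum of `O ∩ 𝒟`
    (hMhi : Mhi ∈ Omat p q ∩ Dmat D ∧
      ∀ X ∈ Omat p q ∩ Dmat D, lexGe (vec Mhi) (vec X))
    -- `iIdx j` is the least `i < p` with `Mlo i j ≠ Mhi i j`, and `p` if none
    (iIdx : Fin q → ℕ)
    (hiIdx : ∀ j : Fin q,
      iIdx j = sInf ({i : ℕ | ∃ h : i < p, Mlo ⟨i, h⟩ j ≠ Mhi ⟨i, h⟩ j} ∪ {p}))
    (Dhat : Fin p → Fin q → Set ℝ)
    (i' : Fin p) (j' : Fin q) (hij : (i' : ℕ) ≤ iIdx j') :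
    ∀ X ∈ Omat p q ∩ Dmat D, Mlo i' j' ≤ X i' j' ∧ X i' j' ≤ Mhi i' j' := by
  intro X hX
  have hlo : toLex (fun i => Mlo i j') ≤ toLex (fun i => X i j') :=
    col_bounds hX hMlo.1 hMlo.2 j'
  have hhi : toLex (fun i => X i j') ≤ toLex (fun i => Mhi i j') :=
    col_bounds' hX hMhi.1 hMhi.2 j'
  have hab : ∀ s : Fin p, (s : ℕ) < iIdx j' → Mlo s j' = Mhi s j' := by
    intro s hs
    rw [hiIdx j'] at hs
    have hnot := Nat.notMem_of_lt_sInf hs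
    simp only [Set.mem_union, Set.mem_setOf_eq, Set.mem_singleton_iff, not_or] at hnot
    have h1 := hnot.1
    push_neg at h1
    have h2 := h1 s.isLt
    simpa using h2
  exact sandwich hlo hhi hab hij
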